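/- If the exponent lattice U_λ is trivial, i.e., the only (i_1,…,i_n) ∈ ℤ^n with λ_1^{i_1}···λ_n^{i_n} = 1 is (0,…,0), then the constant field Const_σ K = {f ∈ K | σ(f) = f} equals F (the image of F inside K). -/

import Mathlib

section Aux
open MvPolynomial AddMonoidAlgebra

variable {F : Type*} [Field F] {n : ℕ} (lam : Fin n → F)

noncomputable def chi (d : Fin n →₀ ℕ) : F := ∏ i, lam i ^ d i

noncomputable def tau : MvPolynomial (Fin n) F →ₐ[F] MvPolynomial (Fin n) F :=
  aeval (fun i => C (lam i) * X i)

lemma tau_monomial (d : Fin n →₀ ℕ) (c : F) :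
    tau lam (monomial d c) = monomial d (chi lam d * c) := by
  rw [tau, aeval_monomial, monomial_eq]
  simp_rw [mul_pow, ← C_pow]
  rw [Finsupp.prod_mul]
  have h1 : (d.prod fun i k => (C (lam i ^ k) : MvPolynomial (Fin n) F)) = C (d.prod fun i k => lam i ^ k) :=
    (map_finsuppProd (C : F →+* MvPolynomial (Fin n) F) _ _).symm
  have h2 : chi lam d = d.prod fun i k => lam i ^ k :=
    (Finsupp.prod_fintype d _ (fun i => pow_zero _)).symm
  rw [h1, algebraMap_eq, ← h2, map_mul]
  ring

lemma coeff_tau (p : MvPolynomial (Fin n) F) (a : Fin n →₀ ℕ) :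
    coeff a (tau lam p) = chi lam a * coeff a p := by
  induction p using MvPolynomial.induction_on' with
  | monomial d c =>
    rw [tau_monomial, coeff_monomial, coeff_monomial]
    split_ifs with h
    · subst h; rfl
    · ring
  | add p q hp hq => simp [map_add, hp, hq, mul_add]

lemma chi_ne_zero (hlam : ∀ i, lam i ≠ 0) (d : Fin n →₀ ℕ) : chi lam d ≠ 0 :=
  Finset.prod_ne_zero_iff.2 fun i _ => pow_ne_zero _ (hlam i)

lemma support_tau (hlam : ∀ i, lam i ≠ 0) (p : MvPolynomial (Fin n) F) :
    (tau lam p).support = p.support := by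
  ext a
  simp [MvPolynomial.mem_support_iff, coeff_tau, chi_ne_zero lam hlam]

lemma chi_inj (hlam : ∀ i, lam i ≠ 0)
    (htriv : ∀ i : Fin n → ℤ, (∏ t, lam t ^ i t) = 1 → i = 0)
    {d e : Fin n →₀ ℕ} (h : chi lam d = chi lam e) : d = e := by
  have key : (fun t => (d t : ℤ) - (e t : ℤ)) = 0 := by
    apply htriv
    have : ∀ t : Fin n, lam t ^ ((d t : ℤ) - (e t : ℤ)) = lam t ^ (d t : ℕ) / lam t ^ (e t : ℕ) := by
      intro t
      rw [zpow_sub₀ (hlam t), zpow_natCast, zpow_natCast]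
    calc (∏ t, lam t ^ ((d t : ℤ) - (e t : ℤ)))
        = (∏ t, lam t ^ (d t : ℕ)) / (∏ t, lam t ^ (e t : ℕ)) := by
          rw [← Finset.prod_div_distrib]; exact Finset.prod_congr rfl fun t _ => this t
      _ = 1 := by
          rw [show (∏ t, lam t ^ (d t : ℕ)) = chi lam d from rfl,
            show (∏ t, lam t ^ (e t : ℕ)) = chi lam e from rfl, h,
            div_self (chi_ne_zero lam hlam e)]
  ext t
  have := congrFun key t
  simp only [Pi.zero_apply, sub_eq_zero] at this
  exact_mod_cast this

lemma supDegree_tau (hlam : ∀ i, lam i ≠ 0) (p : MvPolynomial (Fin n) F) :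
    supDegree toLex (tau lam p) = supDegree toLex p := by
  exact congrArg (fun s : Finset (Fin n →₀ ℕ) => s.sup toLex) (support_tau lam hlam p)

lemma key (hlam : ∀ i, lam i ≠ 0)
    (htriv : ∀ i : Fin n → ℤ, (∏ t, lam t ^ i t) = 1 → i = 0) :
    ∀ (d : Lex (Fin n →₀ ℕ)) (p q : MvPolynomial (Fin n) F), q ≠ 0 →
      tau lam p * q = p * tau lam q → supDegree toLex p ≤ d → ∃ c : F, p = C c * q := by
  intro d
  induction d using WellFoundedLT.induction with
  | _ d IH =>
  intro p q hq hrel hdeg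
  by_cases hp : p = 0
  · exact ⟨0, by simp [hp]⟩
  obtain ⟨a, ha, hda⟩ := exists_supDegree_mem_support toLex hp
  obtain ⟨b, hb, hdb⟩ := exists_supDegree_mem_support toLex hq
  have hpa : coeff a p ≠ 0 := MvPolynomial.mem_support_iff.1 ha
  have hqb : coeff b q ≠ 0 := MvPolynomial.mem_support_iff.1 hb
  have h1 : coeff (a + b) (tau lam p * q) = coeff a (tau lam p) * coeff b q :=
    apply_add_of_supDegree_le (fun _ _ => rfl) toLex.injective
      ((supDegree_tau lam hlam p).trans_le hda.le) hdb.le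
  have h2 : coeff (a + b) (p * tau lam q) = coeff a p * coeff b (tau lam q) :=
    apply_add_of_supDegree_le (fun _ _ => rfl) toLex.injective
      hda.le ((supDegree_tau lam hlam q).trans_le hdb.le)
  rw [hrel, h2, coeff_tau, coeff_tau] at h1
  have hab : a = b := by
    apply chi_inj lam hlam htriv
    have h0 : (chi lam a - chi lam b) * (coeff a p * coeff b q) = 0 := by linear_combination -h1
    rcases mul_eq_zero.1 h0 with h | h
    · exact sub_eq_zero.1 h
    · exact absurd h (mul_ne_zero hpa hqb)
  subst hab
  -- now a is the common leading monomial
  set c : F := coeff a p / coeff a q with hc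
  set p' : MvPolynomial (Fin n) F := p - C c * q with hp'def
  have hrel' : tau lam p' * q = p' * tau lam q := by
    have : tau lam p' = tau lam p - C c * tau lam q := by
      rw [hp'def, map_sub, map_mul, show tau lam (C c) = C c from by
        rw [C_apply, tau_monomial]
        simp [chi]]
    rw [this, hp'def]
    ring_nf
    linear_combination hrel
  have hpa' : coeff a p' = 0 := by
    rw [hp'def, coeff_sub, coeff_C_mul, hc, div_mul_cancel₀ _ hqb, sub_self]
  by_cases hp0 : p' = 0
  · refine ⟨c, ?_⟩
    rw [hp'def] at hp0
    rw [← sub_eq_zero]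
    exact hp0
  · have hx : ∀ x ∈ p'.support, toLex x < toLex a := by
      intro x hx
      have hmem : x ∈ p.support ∪ (C c * q).support := by
        apply Finsupp.support_sub (by exact hx)
      have hle : toLex x ≤ toLex a := by
        rcases Finset.mem_union.1 hmem with h | h
        · exact hda ▸ Finset.le_sup h
        · have : x ∈ q.support := by
            have hsm : (C c * q).support ⊆ q.support := by
              rw [← smul_eq_C_mul]; exact MvPolynomial.support_smul
            exact hsm h
          exact hdb ▸ Finset.le_sup this
      refine hle.lt_of_ne fun he => ?_
      have : x = a := toLex.injective he
      exact MvPolynomial.mem_support_iff.1 hx (this ▸ hpa')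
    have hne : p'.support.Nonempty := Finset.nonempty_iff_ne_empty.2 (mt MvPolynomial.support_eq_empty.1 hp0)
    have hbot : (⊥ : Lex (Fin n →₀ ℕ)) < toLex a := by
      obtain ⟨x, hxmem⟩ := hne
      exact lt_of_le_of_lt bot_le (hx x hxmem)
    have hlt : supDegree toLex p' < toLex a := by
      unfold AddMonoidAlgebra.supDegree
      exact (Finset.sup_lt_iff hbot).2 hx
    obtain ⟨c', hc'⟩ := IH (supDegree toLex p') (lt_of_lt_of_le hlt (hda ▸ hdeg))
      p' q hq hrel' le_rfl
    exact ⟨c' + c, by rw [C_add]; linear_combination hc' - hp'def⟩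

private theorem stmt_2_aux {F : Type*} [Field F]
    {n : ℕ} (hn : 1 ≤ n)
    (lam : Fin n → F) (hlam : ∀ i, lam i ≠ 0)
    (σ : FractionRing (MvPolynomial (Fin n) F) ≃ₐ[F] FractionRing (MvPolynomial (Fin n) F))
    (hσ : ∀ i, σ (algebraMap (MvPolynomial (Fin n) F) _ (X i)) =
      algebraMap F _ (lam i) * algebraMap (MvPolynomial (Fin n) F) _ (X i))
    (htriv : ∀ i : Fin n → ℤ, (∏ t, lam t ^ i t) = 1 → i = 0) :
    {f : FractionRing (MvPolynomial (Fin n) F) | σ f = f} =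
      Set.range (algebraMap F (FractionRing (MvPolynomial (Fin n) F))) := by
  set R := MvPolynomial (Fin n) F
  set K := FractionRing R
  let ι : R →ₐ[F] K := IsScalarTower.toAlgHom F R K
  have hι : ∀ x : F, ι (C x) = algebraMap F K x := fun x => by
    rw [show ι (C x) = algebraMap R K (C x) from rfl, ← MvPolynomial.algebraMap_eq,
      ← IsScalarTower.algebraMap_apply]
  have hcomm : ∀ r : R, σ (algebraMap R K r) = algebraMap R K (tau lam r) := by
    have : (σ.toAlgHom.comp ι) = ι.comp (tau lam) := by
      apply MvPolynomial.algHom_ext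
      intro i
      simp only [AlgHom.comp_apply, AlgHom.coe_coe, IsScalarTower.toAlgHom_apply, AlgEquiv.toAlgHom_eq_coe, AlgEquiv.coe_algHom, ι]
      show σ (algebraMap R K (X i)) = _
      rw [hσ i, show tau lam (X i) = C (lam i) * X i from aeval_X _ i, map_mul, ← hι (lam i)]
      rfl
    intro r
    exact congrArg (fun φ : R →ₐ[F] K => φ r) this
  ext f
  simp only [Set.mem_setOf_eq, Set.mem_range]
  constructor
  · intro hf
    obtain ⟨p, q, hq, hfeq⟩ := IsFractionRing.div_surjective (A := R) (K := K) f
    have hq0 : q ≠ 0 := mem_nonZeroDivisors_iff_ne_zero.1 hq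
    have inj : Function.Injective (algebraMap R K) := IsFractionRing.injective R K
    have hqK : algebraMap R K q ≠ 0 := (map_ne_zero_iff _ inj).2 hq0
    have hτq0 : tau lam q ≠ 0 := by
      intro h
      apply hq0
      rw [← MvPolynomial.support_eq_empty, ← support_tau lam hlam q, h]
      simp
    have hτqK : algebraMap R K (tau lam q) ≠ 0 := (map_ne_zero_iff _ inj).2 hτq0
    rw [← hfeq] at hf
    rw [map_div₀, hcomm, hcomm] at hf
    have hcross : tau lam p * q = p * tau lam q := by
      apply inj
      rw [map_mul, map_mul]
      exact (div_eq_div_iff hτqK hqK).1 hf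
    obtain ⟨c, hc⟩ := key lam hlam htriv (AddMonoidAlgebra.supDegree toLex p) p q hq0 hcross le_rfl
    refine ⟨c, ?_⟩
    rw [← hfeq, hc, map_mul, mul_div_assoc, div_self hqK, mul_one]
    exact (hι c).symm
  · rintro ⟨c, rfl⟩
    exact σ.commutes c

end Aux


open MvPolynomial

/-- `K F n` is the rational function field `F(α₁,…,αₙ)`. -/
abbrev K (F : Type*) [Field F] (n : ℕ) := FractionRing (MvPolynomial (Fin n) F)

/-- The canonical image of the variable `αᵢ` in `K F n`. -/
noncomputable def α {F : Type*} [Field F] {n : ℕ} (i : Fin n) : K F n :=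
  algebraMap (MvPolynomial (Fin n) F) (K F n) (X i)

/-- Let `σ` be the `F`-algebra automorphism of `K = F(α₁,…,αₙ)` with
`σ(αᵢ) = λᵢ αᵢ` (all `λᵢ ∈ F` nonzero). If the exponent lattice is trivial, i.e. the only
`(i₁,…,iₙ) ∈ ℤⁿ` with `λ₁^{i₁}⋯λₙ^{iₙ} = 1` is `0`, then the constant field
`{f ∈ K | σ(f) = f}` equals (the image of) `F`. -/
theorem stmt_2 {F : Type*} [Field F] [Algebra F (AlgebraicClosure ℚ)]
    {n : ℕ} (hn : 1 ≤ n)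
    (lam : Fin n → F) (hlam : ∀ i, lam i ≠ 0)
    (σ : K F n ≃ₐ[F] K F n)
    (hσ : ∀ i, σ (α i) = algebraMap F (K F n) (lam i) * α i)
    (htriv : ∀ i : Fin n → ℤ, (∏ t, lam t ^ i t) = 1 → i = 0) :
    {f : K F n | σ f = f} = Set.range (algebraMap F (K F n)) := by
  exact stmt_2_aux hn lam hlam σ hσ htriv
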